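/- arXiv:2505.09860 — 9 statements merged into one kernel-verified Lean document; each statement's English description precedes it below -/
import Mathlib

section
/- Let 0 ≤ a_j ≤ a_i < 1 - b_j ≤ 1 - b_i ≤ 1 (writing v̄ := 1 - v), and let H_i, H_j : [0,1] → ℝ be continuously differentiable on an open set containing [a_j, b̄_i]. With K(w,v) := min{w,v} − w·v and with I_f(a,b) := b·f(b) − a·f(a) − ∫_a^b f(v) dv and Ī_f(a,b) := b̄·f(b) − ā·f(a) + ∫_a^b f(v) dv, the double integral ∫_{a_i}^{b̄_i} ∫_{a_j}^{b̄_j} K(v,w) H_j'(v) H_i'(w) dv dw equals I_{H_j}(a_j, a_i)·Ī_{H_i}(a_i, b̄_i) + b_i·H_i(b̄_i)·I_{H_j}(a_i, b̄_j) − a_i·H_i(a_i)·Ī_{H_j}(a_i, b̄_j) + ∫_{a_i}^{b̄_j} H_i(v) H_j(v) dv + [b̄_j·H_j(b̄_j) − a_i·H_j(a_i)]·∫_{b̄_j}^{b̄_i} H_i(v) dv − [a_i·H_j(a_i) + b_j·H_j(b̄_j)]·∫_{a_i}^{b̄_j} H_i(v) dv − (∫_{a_i}^{b̄_j} H_j(v)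 dv)·(∫_{a_i}^{b̄_j} H_i(v) dv) − (∫_{a_i}^{b̄_j} H_j(v) dv)·(∫_{b̄_j}^{b̄_i} H_i(v) dv). -/
open MeasureTheory Set

/-- The kernel `K(w,v) = min{w,v} - w·v`. -/
noncomputable def kerK (w v : ℝ) : ℝ := min w v - w * v

/-- `I_f(a,b) = b·f(b) - a·f(a) - ∫_a^b f(v) dv`. -/
noncomputable def Ifun (f : ℝ → ℝ) (a b : ℝ) : ℝ :=
  b * f b - a * f a - ∫ v in a..b, f v

/-- `Ī_f(a,b) = (1-b)·f(b) - (1-a)·f(a) + ∫_a^b f(v) dv`. -/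
noncomputable def Ibar (f : ℝ → ℝ) (a b : ℝ) : ℝ :=
  (1 - b) * f b - (1 - a) * f a + ∫ v in a..b, f v

private lemma hasDerivAt_of_cd {f : ℝ → ℝ} {U : Set ℝ} (hU : IsOpen U)
    (hf : ContDiffOn ℝ 1 f U) {x : ℝ} (hx : x ∈ U) : HasDerivAt f (deriv f x) x :=
  ((hf.differentiableOn one_ne_zero x hx).differentiableAt (hU.mem_nhds hx)).hasDerivAt

private lemma ftc_cd {f : ℝ → ℝ} {U : Set ℝ} (hU : IsOpen U) (hf : ContDiffOn ℝ 1 f U)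
    {a b : ℝ} (hab : Set.uIcc a b ⊆ U) :
    ∫ v in a..b, deriv f v = f b - f a := by
  apply intervalIntegral.integral_deriv_eq_sub
  · exact fun x hx => ((hf.differentiableOn one_ne_zero x (hab hx)).differentiableAt
      (hU.mem_nhds (hab hx)))
  · exact ((hf.continuousOn_deriv_of_isOpen hU le_rfl).mono hab).intervalIntegrable

private lemma ibp_id {f : ℝ → ℝ} {U : Set ℝ} (hU : IsOpen U) (hf : ContDiffOn ℝ 1 f U)
    {a b : ℝ} (hab : Set.uIcc a b ⊆ U) :
    ∫ v in a..b, v * deriv f v = b * f b - a * f a - ∫ v in a..b, f v := by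
  have h := intervalIntegral.integral_mul_deriv_eq_deriv_mul
    (u := fun y : ℝ => y) (u' := fun _ => (1:ℝ)) (v := f) (v' := deriv f)
    (fun x _ => hasDerivAt_id x)
    (fun x hx => hasDerivAt_of_cd hU hf (hab hx))
    intervalIntegrable_const
    (((hf.continuousOn_deriv_of_isOpen hU le_rfl).mono hab).intervalIntegrable)
  simpa using h

private lemma ibp_one_sub {f : ℝ → ℝ} {U : Set ℝ} (hU : IsOpen U) (hf : ContDiffOn ℝ 1 f U)
    {a b : ℝ} (hab : Set.uIcc a b ⊆ U) :
    ∫ v in a..b, (1 - v) * deriv f v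
      = (1 - b) * f b - (1 - a) * f a + ∫ v in a..b, f v := by
  have hd : IntervalIntegrable (deriv f) volume a b :=
    ((hf.continuousOn_deriv_of_isOpen hU le_rfl).mono hab).intervalIntegrable
  have hd2 : IntervalIntegrable (fun v => v * deriv f v) volume a b :=
    (continuousOn_id.mul ((hf.continuousOn_deriv_of_isOpen hU le_rfl).mono hab)).intervalIntegrable
  have h1 : ∫ v in a..b, (1 - v) * deriv f v
      = (∫ v in a..b, deriv f v) - ∫ v in a..b, v * deriv f v := by
    rw [← intervalIntegral.integral_sub hd hd2]
    apply intervalIntegral.integral_congr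
    intro v _
    ring
  rw [h1, ftc_cd hU hf hab, ibp_id hU hf hab]
  ring

private theorem aux_cov (A B C D : ℝ)
    (h1 : A ≤ B) (h2 : B < C) (h3 : C ≤ D)
    (Hi Hj : ℝ → ℝ) (U : Set ℝ) (hU : IsOpen U) (hsub : Icc A D ⊆ U)
    (hHi : ContDiffOn ℝ 1 Hi U) (hHj : ContDiffOn ℝ 1 Hj U) :
    (∫ w in B..D, ∫ v in A..C, kerK v w * deriv Hj v * deriv Hi w)
    = (B * Hj B - A * Hj A - ∫ v in A..B, Hj v) *
        ((1 - D) * Hi D - (1 - B) * Hi B + ∫ v in B..D, Hi v)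
      + (1 - D) * Hi D * (C * Hj C - B * Hj B - ∫ v in B..C, Hj v)
      - B * Hi B * ((1 - C) * Hj C - (1 - B) * Hj B + ∫ v in B..C, Hj v)
      + (∫ v in B..C, Hi v * Hj v)
      + (C * Hj C - B * Hj B) * (∫ v in C..D, Hi v)
      - (B * Hj B + (1 - C) * Hj C) * (∫ v in B..C, Hi v)
      - (∫ v in B..C, Hj v) * (∫ v in B..C, Hi v)
      - (∫ v in B..C, Hj v) * (∫ v in C..D, Hi v) := by
  have hBC : B ≤ C := h2.le
  have hBD : B ≤ D := hBC.trans h3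
  have hAD : A ≤ D := h1.trans hBD
  have hAC : A ≤ C := h1.trans hBC
  have hcHj : ContinuousOn Hj U := hHj.continuousOn
  have hcHi : ContinuousOn Hi U := hHi.continuousOn
  have hcdHj : ContinuousOn (deriv Hj) U := hHj.continuousOn_deriv_of_isOpen hU le_rfl
  have hcdHi : ContinuousOn (deriv Hi) U := hHi.continuousOn_deriv_of_isOpen hU le_rfl
  have hsubint : ∀ {a b : ℝ}, A ≤ a → a ≤ b → b ≤ D → Set.uIcc a b ⊆ U := by
    intro a b ha hab hb
    rw [Set.uIcc_of_le hab]
    exact fun x hx => hsub ⟨ha.trans hx.1, hx.2.trans hb⟩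
  -- derivative of primitive of Hj
  have hFderiv : ∀ w ∈ Icc A D, HasDerivAt (fun u => ∫ v in A..u, Hj v) (Hj w) w := by
    intro w hw
    exact intervalIntegral.integral_hasDerivAt_right
      ((hcHj.mono (hsubint le_rfl hw.1 hw.2)).intervalIntegrable)
      (hcHj.stronglyMeasurableAtFilter hU w (hsub hw))
      (hcHj.continuousAt (hU.mem_nhds (hsub hw)))
  set c : ℝ := A * Hj A + (1 - C) * Hj C + ∫ v in A..C, Hj v with hc
  -- inner integral for w ∈ [B, C]
  have inner_le : ∀ w ∈ Icc B C, (∫ v in A..C, kerK v w * deriv Hj v)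
      = -(A * Hj A) + w * c - ∫ v in A..w, Hj v := by
    intro w hw
    have hAw : A ≤ w := h1.trans hw.1
    have hwC : w ≤ C := hw.2
    have hwD : w ≤ D := hwC.trans h3
    have hker : Continuous fun v : ℝ => kerK v w :=
      (continuous_id.min continuous_const).sub (continuous_id.mul continuous_const)
    have hint1 : IntervalIntegrable (fun v => kerK v w * deriv Hj v) volume A w :=
      (hker.continuousOn.mul (hcdHj.mono (hsubint le_rfl hAw hwD))).intervalIntegrable
    have hint2 : IntervalIntegrable (fun v => kerK v w * deriv Hj v) volume w C :=
      (hker.continuousOn.mul (hcdHj.mono (hsubint hAw hwC h3))).intervalIntegrable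
    have hsplit := intervalIntegral.integral_add_adjacent_intervals hint1 hint2
    have hFsplit : (∫ v in A..w, Hj v) + (∫ v in w..C, Hj v) = ∫ v in A..C, Hj v :=
      intervalIntegral.integral_add_adjacent_intervals
        ((hcHj.mono (hsubint le_rfl hAw hwD)).intervalIntegrable)
        ((hcHj.mono (hsubint hAw hwC h3)).intervalIntegrable)
    have e1 : (∫ v in A..w, kerK v w * deriv Hj v)
        = (1 - w) * (w * Hj w - A * Hj A - ∫ v in A..w, Hj v) := by
      have hcg : EqOn (fun v => kerK v w * deriv Hj v)
          (fun v => (1 - w) * (v * deriv Hj v)) (Set.uIcc A w) := by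
        intro v hv
        rw [Set.uIcc_of_le hAw] at hv
        simp only [kerK, min_eq_left hv.2]
        ring
      rw [intervalIntegral.integral_congr hcg, intervalIntegral.integral_const_mul,
        ibp_id hU hHj (hsubint le_rfl hAw hwD)]
    have e2 : (∫ v in w..C, kerK v w * deriv Hj v)
        = w * ((1 - C) * Hj C - (1 - w) * Hj w + ∫ v in w..C, Hj v) := by
      have hcg : EqOn (fun v => kerK v w * deriv Hj v)
          (fun v => w * ((1 - v) * deriv Hj v)) (Set.uIcc w C) := by
        intro v hv
        rw [Set.uIcc_of_le hwC] at hv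
        simp only [kerK, min_eq_right hv.1]
        ring
      rw [intervalIntegral.integral_congr hcg, intervalIntegral.integral_const_mul,
        ibp_one_sub hU hHj (hsubint hAw hwC h3)]
    have hwCint : (∫ v in w..C, Hj v) = (∫ v in A..C, Hj v) - ∫ v in A..w, Hj v := by
      linarith
    rw [← hsplit, e1, e2, hwCint, hc]
    ring
  -- inner integral for w ∈ [C, D]
  have inner_ge : ∀ w ∈ Icc C D, (∫ v in A..C, kerK v w * deriv Hj v)
      = (1 - w) * (C * Hj C - A * Hj A - ∫ v in A..C, Hj v) := by
    intro w hw
    have hcg : EqOn (fun v => kerK v w * deriv Hj v)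
        (fun v => (1 - w) * (v * deriv Hj v)) (Set.uIcc A C) := by
      intro v hv
      rw [Set.uIcc_of_le hAC] at hv
      simp only [kerK, min_eq_left (hv.2.trans hw.1)]
      ring
    rw [intervalIntegral.integral_congr hcg, intervalIntegral.integral_const_mul,
      ibp_id hU hHj (hsubint le_rfl hAC h3)]
  -- continuity of the primitive
  have hFcont : ContinuousOn (fun u => ∫ v in A..u, Hj v) (Icc A D) :=
    fun w hw => ((hFderiv w hw).continuousAt).continuousWithinAt
  -- the two explicit integrands are continuous on [A, D]
  have hg1cont : ContinuousOn
      (fun w => (-(A * Hj A) + w * c - ∫ v in A..w, Hj v) * deriv Hi w) (Icc A D) := by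
    exact (((continuous_const.add (continuous_id.mul continuous_const)).continuousOn.sub
      hFcont).mul (hcdHi.mono hsub))
  have hg2cont : ContinuousOn
      (fun w => (1 - w) * (C * Hj C - A * Hj A - ∫ v in A..C, Hj v) * deriv Hi w) (Icc A D) := by
    exact (((continuous_const.sub continuous_id).mul continuous_const).continuousOn.mul
      (hcdHi.mono hsub))
  -- interval integrability of the original outer integrand on the two pieces
  have hfib1 : IntervalIntegrable
      (fun w => (∫ v in A..C, kerK v w * deriv Hj v) * deriv Hi w) volume B C := by
    rw [intervalIntegrable_iff_integrableOn_Ioc_of_le hBC]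
    have hg : IntegrableOn
        (fun w => (-(A * Hj A) + w * c - ∫ v in A..w, Hj v) * deriv Hi w) (Ioc B C) :=
      (intervalIntegrable_iff_integrableOn_Ioc_of_le hBC).mp
        ((hg1cont.mono (by
          intro x hx
          rw [Set.uIcc_of_le hBC] at hx
          exact ⟨h1.trans hx.1, hx.2.trans h3⟩)).intervalIntegrable)
    exact hg.congr_fun
      (fun w hw => by rw [inner_le w ⟨hw.1.le, hw.2⟩]) measurableSet_Ioc
  have hfib2 : IntervalIntegrable
      (fun w => (∫ v in A..C, kerK v w * deriv Hj v) * deriv Hi w) volume C D := by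
    rw [intervalIntegrable_iff_integrableOn_Ioc_of_le h3]
    have hg : IntegrableOn
        (fun w => (1 - w) * (C * Hj C - A * Hj A - ∫ v in A..C, Hj v) * deriv Hi w)
        (Ioc C D) :=
      (intervalIntegrable_iff_integrableOn_Ioc_of_le h3).mp
        ((hg2cont.mono (by
          intro x hx
          rw [Set.uIcc_of_le h3] at hx
          exact ⟨hAC.trans hx.1, hx.2⟩)).intervalIntegrable)
    exact hg.congr_fun
      (fun w hw => by rw [inner_ge w ⟨hw.1.le, hw.2⟩]) measurableSet_Ioc
  have hsplitout := intervalIntegral.integral_add_adjacent_intervals hfib1 hfib2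
  -- piece 1
  have piece1 : (∫ w in B..C, (∫ v in A..C, kerK v w * deriv Hj v) * deriv Hi w)
      = (-(A * Hj A) + C * c - ∫ v in A..C, Hj v) * Hi C
        - (-(A * Hj A) + B * c - ∫ v in A..B, Hj v) * Hi B
        - (c * (∫ w in B..C, Hi w) - ∫ w in B..C, Hi w * Hj w) := by
    have hcg : EqOn (fun w => (∫ v in A..C, kerK v w * deriv Hj v) * deriv Hi w)
        (fun w => (-(A * Hj A) + w * c - ∫ v in A..w, Hj v) * deriv Hi w)
        (Set.uIcc B C) := by
      intro w hw
      rw [Set.uIcc_of_le hBC] at hw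
      simp only
      rw [inner_le w hw]
    rw [intervalIntegral.integral_congr hcg]
    have hu : ∀ x ∈ Set.uIcc B C,
        HasDerivAt (fun w => -(A * Hj A) + w * c - ∫ v in A..w, Hj v) (c - Hj x) x := by
      intro x hx
      rw [Set.uIcc_of_le hBC] at hx
      have hx' : x ∈ Icc A D := ⟨h1.trans hx.1, hx.2.trans h3⟩
      have hlin : HasDerivAt (fun w : ℝ => -(A * Hj A) + w * c) c x := by
        simpa using ((hasDerivAt_id x).mul_const c).const_add (-(A * Hj A))
      exact hlin.sub (hFderiv x hx')
    have hibp := intervalIntegral.integral_mul_deriv_eq_deriv_mul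
      (u := fun w => -(A * Hj A) + w * c - ∫ v in A..w, Hj v)
      (u' := fun x => c - Hj x) (v := Hi) (v' := deriv Hi)
      hu (fun x hx => hasDerivAt_of_cd hU hHi (hsubint h1 hBC h3 hx))
      ((continuousOn_const.sub (hcHj.mono (hsubint h1 hBC h3))).intervalIntegrable)
      ((hcdHi.mono (hsubint h1 hBC h3)).intervalIntegrable)
    rw [hibp]
    have hsub2 : (∫ x in B..C, (c - Hj x) * Hi x)
        = c * (∫ x in B..C, Hi x) - ∫ x in B..C, Hi x * Hj x := by
      have hcg2 : EqOn (fun x => (c - Hj x) * Hi x)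
          (fun x => c * Hi x - Hi x * Hj x) (Set.uIcc B C) := fun x _ => by ring
      rw [intervalIntegral.integral_congr hcg2,
        intervalIntegral.integral_sub (f := fun x => c * Hi x) (g := fun x => Hi x * Hj x)
          ((continuousOn_const.mul (hcHi.mono (hsubint h1 hBC h3))).intervalIntegrable)
          (((hcHi.mono (hsubint h1 hBC h3)).mul
            (hcHj.mono (hsubint h1 hBC h3))).intervalIntegrable),
        intervalIntegral.integral_const_mul]
    rw [hsub2]
  -- piece 2
  have piece2 : (∫ w in C..D, (∫ v in A..C, kerK v w * deriv Hj v) * deriv Hi w)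
      = (C * Hj C - A * Hj A - ∫ v in A..C, Hj v) *
          ((1 - D) * Hi D - (1 - C) * Hi C + ∫ v in C..D, Hi v) := by
    have hcg : EqOn (fun w => (∫ v in A..C, kerK v w * deriv Hj v) * deriv Hi w)
        (fun w => (C * Hj C - A * Hj A - ∫ v in A..C, Hj v) * ((1 - w) * deriv Hi w))
        (Set.uIcc C D) := by
      intro w hw
      rw [Set.uIcc_of_le h3] at hw
      simp only
      rw [inner_ge w hw]
      ring
    rw [intervalIntegral.integral_congr hcg, intervalIntegral.integral_const_mul,
      ibp_one_sub hU hHi (hsubint hAC h3 le_rfl)]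
  -- assemble
  have hJ : (∫ v in A..B, Hj v) + (∫ v in B..C, Hj v) = ∫ v in A..C, Hj v :=
    intervalIntegral.integral_add_adjacent_intervals
      ((hcHj.mono (hsubint le_rfl h1 hBD)).intervalIntegrable)
      ((hcHj.mono (hsubint h1 hBC h3)).intervalIntegrable)
  have hK : (∫ v in B..C, Hi v) + (∫ v in C..D, Hi v) = ∫ v in B..D, Hi v :=
    intervalIntegral.integral_add_adjacent_intervals
      ((hcHi.mono (hsubint h1 hBC h3)).intervalIntegrable)
      ((hcHi.mono (hsubint hAC h3 le_rfl)).intervalIntegrable)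
  calc (∫ w in B..D, ∫ v in A..C, kerK v w * deriv Hj v * deriv Hi w)
      = ∫ w in B..D, (∫ v in A..C, kerK v w * deriv Hj v) * deriv Hi w := by
        simp only [intervalIntegral.integral_mul_const]
    _ = (∫ w in B..C, (∫ v in A..C, kerK v w * deriv Hj v) * deriv Hi w)
        + ∫ w in C..D, (∫ v in A..C, kerK v w * deriv Hj v) * deriv Hi w := hsplitout.symm
    _ = _ := by
        rw [piece1, piece2, hc, ← hJ, ← hK]
        ring

/-- Single-integration expression for the double integral
`∫_{a_i}^{b̄_i} ∫_{a_j}^{b̄_j} K(v,w) H_j'(v) H_i'(w) dv dw` under the trimming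
inequality `0 ≤ a_j ≤ a_i < b̄_j ≤ b̄_i ≤ 1`. -/
theorem doubleIntegral_trimmed_moment_covariance
    (aj ai bj bi : ℝ)
    (h0 : 0 ≤ aj) (h1 : aj ≤ ai) (h2 : ai < 1 - bj) (h3 : 1 - bj ≤ 1 - bi)
    (h4 : 1 - bi ≤ 1)
    (Hi Hj : ℝ → ℝ) (U : Set ℝ) (hU : IsOpen U) (hsub : Icc aj (1 - bi) ⊆ U)
    (hHi : ContDiffOn ℝ 1 Hi U) (hHj : ContDiffOn ℝ 1 Hj U) :
    (∫ w in ai..(1 - bi), ∫ v in aj..(1 - bj),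
        kerK v w * deriv Hj v * deriv Hi w)
      =
    Ifun Hj aj ai * Ibar Hi ai (1 - bi)
      + bi * Hi (1 - bi) * Ifun Hj ai (1 - bj)
      - ai * Hi ai * Ibar Hj ai (1 - bj)
      + (∫ v in ai..(1 - bj), Hi v * Hj v)
      + ((1 - bj) * Hj (1 - bj) - ai * Hj ai) * (∫ v in (1 - bj)..(1 - bi), Hi v)
      - (ai * Hj ai + bj * Hj (1 - bj)) * (∫ v in ai..(1 - bj), Hi v)
      - (∫ v in ai..(1 - bj), Hj v) * (∫ v in ai..(1 - bj), Hi v)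
      - (∫ v in ai..(1 - bj), Hj v) * (∫ v in (1 - bj)..(1 - bi), Hi v) := by
  obtain ⟨C, rfl⟩ : ∃ C, bj = 1 - C := ⟨1 - bj, by ring⟩
  obtain ⟨D, rfl⟩ : ∃ D, bi = 1 - D := ⟨1 - bi, by ring⟩
  have e1 : (1:ℝ) - (1 - C) = C := by ring
  have e2 : (1:ℝ) - (1 - D) = D := by ring
  simp only [e1, e2] at h2 h3 h4 hsub ⊢
  rw [aux_cov aj ai C D h1 h2 h3 Hi Hj U hU hsub hHi hHj]
  simp only [Ifun, Ibar]
end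

section
/- Let g : (0,1) → ℝ be strictly increasing with g and g² integrable on (0,1), and define c_k(a,b) := (1/(b−a)) ∫_a^b g(u)^k du for 0 ≤ a < b ≤ 1 and integers k ≥ 1. If the trimming proportions satisfy 0 ≤ a_j ≤ a_i < b̄_j ≤ b̄_i ≤ 1 (writing v̄ := 1 − v), then η(a_i, b̄_j) := c₁(a_i, b̄_i)² − 2·c₁(a_i, b̄_i)·c₁(a_j, b̄_j) + c₂(a_j, b̄_j) > 0. -/
open MeasureTheory Set

/-- The trimmed-moment constant `c_k(a,b) = (1/(b-a)) ∫_a^b g(u)^k du`. -/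
noncomputable def trimC (g : ℝ → ℝ) (k : ℕ) (a b : ℝ) : ℝ :=
  (b - a)⁻¹ * ∫ u in a..b, (g u) ^ k

lemma var_pos (g : ℝ → ℝ) (hmono : StrictMonoOn g (Ioo 0 1))
    (hint1 : IntegrableOn g (Ioo 0 1))
    (hint2 : IntegrableOn (fun u => (g u) ^ 2) (Ioo 0 1))
    (a b : ℝ) (ha : 0 ≤ a) (hab : a < b) (hb : b ≤ 1) :
    ((b - a)⁻¹ * ∫ u in Ioo a b, g u) ^ 2 < (b - a)⁻¹ * ∫ u in Ioo a b, (g u) ^ 2 := by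
  have hsub : Ioo a b ⊆ Ioo (0:ℝ) 1 := Ioo_subset_Ioo ha hb
  have hg1 : IntegrableOn g (Ioo a b) := hint1.mono_set hsub
  have hg2 : IntegrableOn (fun u => (g u) ^ 2) (Ioo a b) := hint2.mono_set hsub
  have hLpos : (0:ℝ) < b - a := sub_pos.2 hab
  set L : ℝ := b - a with hLdef
  set I1 : ℝ := ∫ u in Ioo a b, g u with hI1
  set I2 : ℝ := ∫ u in Ioo a b, (g u) ^ 2 with hI2
  set c : ℝ := I1 / L with hc
  have hconst : IntegrableOn (fun _ : ℝ => c ^ 2) (Ioo a b) :=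
    integrableOn_const measure_Ioo_lt_top.ne
  have heq : (fun u => (g u - c) ^ 2) = fun u => ((g u) ^ 2 - 2 * c * g u) + c ^ 2 := by
    funext u; ring
  have hf : IntegrableOn (fun u => (g u - c) ^ 2) (Ioo a b) := by
    rw [heq]; exact (hg2.sub (hg1.const_mul _)).add hconst
  have hpos : 0 < ∫ u in Ioo a b, (g u - c) ^ 2 := by
    rw [setIntegral_pos_iff_support_of_nonneg_ae
      (Filter.Eventually.of_forall fun u => sq_nonneg _) hf]
    have hdiff : volume (Ioo a b \ Function.support fun u => (g u - c) ^ 2) = 0 := by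
      have hss : (Ioo a b \ Function.support fun u => (g u - c) ^ 2)
          ⊆ {u | g u = c} ∩ Ioo a b := by
        intro x hx
        refine ⟨?_, hx.1⟩
        have h := hx.2
        simp only [Function.mem_support, ne_eq, not_not] at h
        have h2 : g x - c = 0 := by nlinarith [h]
        show g x = c
        linarith
      have hnull : volume ({u | g u = c} ∩ Ioo a b) = 0 := by
        apply Set.Subsingleton.measure_zero
        intro x hx y hy
        exact hmono.injOn (hsub hx.2) (hsub hy.2) (hx.1.trans hy.1.symm)
      exact measure_mono_null hss hnull
    have hle := measure_le_inter_add_diff volume (Ioo a b)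
      (Function.support fun u => (g u - c) ^ 2)
    rw [hdiff, add_zero] at hle
    have h0 : 0 < volume (Ioo a b) := by
      rw [Real.volume_Ioo]; exact ENNReal.ofReal_pos.2 hLpos
    have := lt_of_lt_of_le h0 hle
    rwa [Set.inter_comm] at this
  have hexp : ∫ u in Ioo a b, (g u - c) ^ 2 = (I2 - 2 * c * I1) + c ^ 2 * L := by
    have e1 : ∫ u in Ioo a b, (g u ^ 2 - 2 * c * g u + c ^ 2)
        = (∫ u in Ioo a b, (g u ^ 2 - 2 * c * g u)) + ∫ _u in Ioo a b, (c ^ 2 : ℝ) :=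
      integral_add (hg2.sub (hg1.const_mul (2 * c))) hconst
    have e2 : ∫ u in Ioo a b, (g u ^ 2 - 2 * c * g u)
        = I2 - ∫ u in Ioo a b, 2 * c * g u := integral_sub hg2 (hg1.const_mul (2 * c))
    have e3 : ∫ u in Ioo a b, 2 * c * g u = 2 * c * I1 := integral_const_mul _ _
    rw [heq, e1, e2, e3, setIntegral_const]
    simp [Real.volume_Ioo, ENNReal.toReal_ofReal hLpos.le, hLdef, smul_eq_mul]
    rw [max_eq_left (sub_pos.2 hab).le]
    ring
  rw [hexp] at hpos
  have hL0 : L ≠ 0 := hLpos.ne'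
  rw [hc] at hpos
  have key : I1 ^ 2 < L * I2 := by
    field_simp at hpos
    nlinarith [hpos, hLpos]
  have h1 : (L⁻¹ * I1) ^ 2 = I1 ^ 2 / L ^ 2 := by field_simp
  rw [h1]
  rw [div_lt_iff₀ (by positivity), inv_mul_eq_div, div_mul_eq_mul_div,
    lt_div_iff₀ hLpos]
  nlinarith [key, hLpos]

/-- Positivity of `η(a_i, b̄_j) = c₁(a_i,b̄_i)² - 2c₁(a_i,b̄_i)c₁(a_j,b̄_j) + c₂(a_j,b̄_j)`
for a strictly increasing quantile function `g` and trimming proportions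
`0 ≤ a_j ≤ a_i < b̄_j ≤ b̄_i ≤ 1`. -/
theorem eta_pos (g : ℝ → ℝ)
    (hmono : StrictMonoOn g (Ioo 0 1))
    (hint1 : IntegrableOn g (Ioo 0 1))
    (hint2 : IntegrableOn (fun u => (g u) ^ 2) (Ioo 0 1))
    (aj ai bj bi : ℝ)
    (h0 : 0 ≤ aj) (h1 : aj ≤ ai) (h2 : ai < 1 - bj) (h3 : 1 - bj ≤ 1 - bi)
    (h4 : 1 - bi ≤ 1) :
    0 < (trimC g 1 ai (1 - bi)) ^ 2
        - 2 * trimC g 1 ai (1 - bi) * trimC g 1 aj (1 - bj)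
        + trimC g 2 aj (1 - bj) := by

  have haj : aj < 1 - bj := lt_of_le_of_lt h1 h2
  have hbj : 1 - bj ≤ 1 := le_trans h3 h4
  have hvar := var_pos g hmono hint1 hint2 aj (1 - bj) h0 haj hbj
  have e1 : trimC g 1 aj (1 - bj) = ((1 - bj) - aj)⁻¹ * ∫ u in Ioo aj (1 - bj), g u := by
    rw [trimC, intervalIntegral.integral_of_le haj.le, integral_Ioc_eq_integral_Ioo]
    simp [pow_one]
  have e2 : trimC g 2 aj (1 - bj) = ((1 - bj) - aj)⁻¹ * ∫ u in Ioo aj (1 - bj), (g u) ^ 2 := by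
    rw [trimC, intervalIntegral.integral_of_le haj.le, integral_Ioc_eq_integral_Ioo]
  rw [e1, e2]
  nlinarith [hvar, sq_nonneg (trimC g 1 ai (1 - bi)
    - ((1 - bj) - aj)⁻¹ * ∫ u in Ioo aj (1 - bj), g u)]
end

section
/- Let g : (0,1) → ℝ be strictly increasing with g and g² integrable on (0,1), and define c_k(a,b) := (1/(b−a)) ∫_a^b g(u)^k du. Suppose 0 ≤ a_j ≤ a_i < b̄_j ≤ b̄_i ≤ 1 (writing v̄ := 1 − v), and set η(a_i, b̄_j) := c₁(a_i, b̄_i)² − 2·c₁(a_i, b̄_i)·c₁(a_j, b̄_j) + c₂(a_j, b̄_j) and η(a_j, b̄_j) := c₂(a_j, b̄_j) − c₁(a_j, b̄_j)². Then the ratio η_r := η(a_j, b̄_j) / η(a_i, b̄_j) satisfies 0 < η_r ≤ 1. -/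
open MeasureTheory Set

/-- The ratio `η_r = η(a_j,b̄_j)/η(a_i,b̄_j)` satisfies `0 < η_r ≤ 1` for a strictly
increasing quantile function `g` and trimming proportions
`0 ≤ a_j ≤ a_i < b̄_j ≤ b̄_i ≤ 1`. -/
theorem eta_ratio_mem_Ioc (g : ℝ → ℝ)
    (hmono : StrictMonoOn g (Ioo 0 1))
    (hint1 : IntegrableOn g (Ioo 0 1))
    (hint2 : IntegrableOn (fun u => (g u) ^ 2) (Ioo 0 1))
    (aj ai bj bi : ℝ)
    (h0 : 0 ≤ aj) (h1 : aj ≤ ai) (h2 : ai < 1 - bj) (h3 : 1 - bj ≤ 1 - bi)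
    (h4 : 1 - bi ≤ 1)
    (ηij ηjj ηr : ℝ)
    (hηij : ηij = (trimC g 1 ai (1 - bi)) ^ 2
        - 2 * trimC g 1 ai (1 - bi) * trimC g 1 aj (1 - bj)
        + trimC g 2 aj (1 - bj))
    (hηjj : ηjj = trimC g 2 aj (1 - bj) - (trimC g 1 aj (1 - bj)) ^ 2)
    (hηr : ηr = ηjj / ηij) :
    0 < ηr ∧ ηr ≤ 1 := by
  set b : ℝ := 1 - bj with hbdef
  have hab : aj < b := lt_of_le_of_lt h1 h2
  have hb1 : b ≤ 1 := le_trans h3 h4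
  have hsub : Ioo aj b ⊆ Ioo 0 1 := fun u hu =>
    ⟨lt_of_le_of_lt h0 hu.1, lt_of_lt_of_le hu.2 hb1⟩
  have hL : (0:ℝ) < b - aj := sub_pos.mpr hab
  set L : ℝ := b - aj with hLdef
  have hg1 : IntegrableOn g (Ioo aj b) := hint1.mono_set hsub
  have hg2 : IntegrableOn (fun u => (g u)^2) (Ioo aj b) := hint2.mono_set hsub
  set I1 : ℝ := ∫ u in Ioo aj b, g u with hI1
  set I2 : ℝ := ∫ u in Ioo aj b, (g u)^2 with hI2
  set μ : ℝ := L⁻¹ * I1 with hμ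
  have hvol : volume (Ioo aj b) = ENNReal.ofReal L := Real.volume_Ioo
  have hc1 : trimC g 1 aj b = μ := by
    rw [trimC, intervalIntegral.integral_of_le hab.le, integral_Ioc_eq_integral_Ioo]
    simp [hμ, hI1]
    exact Or.inl rfl
  have hc2 : trimC g 2 aj b = L⁻¹ * I2 := by
    rw [trimC, intervalIntegral.integral_of_le hab.le, integral_Ioc_eq_integral_Ioo]
  have hconst : IntegrableOn (fun _ : ℝ => μ^2) (Ioo aj b) := by
    refine (integrableOn_const_iff (C := μ^2)).mpr (Or.inr ?_)
    rw [hvol]; exact ENNReal.ofReal_lt_top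
  have heq : (fun u => (g u - μ)^2) = fun u => ((g u)^2 - (2*μ)*(g u)) + μ^2 := by
    funext u; ring
  have hsubint : IntegrableOn (fun u => g u ^ 2 - 2*μ*g u) (Ioo aj b) :=
    hg2.sub (hg1.const_mul (2*μ))
  have hint : IntegrableOn (fun u => (g u - μ)^2) (Ioo aj b) := by
    rw [heq]; exact hsubint.add hconst
  have hexpand : ∫ u in Ioo aj b, (g u - μ)^2 = I2 - 2*μ*I1 + μ^2 * L := by
    rw [heq, integral_add hsubint hconst,
        integral_sub hg2 (hg1.const_mul (2*μ)), MeasureTheory.integral_const_mul, setIntegral_const,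
        measureReal_def, hvol, ENNReal.toReal_ofReal hL.le]
    rw [smul_eq_mul]; ring
  have hpos : 0 < ∫ u in Ioo aj b, (g u - μ)^2 := by
    rw [setIntegral_pos_iff_support_of_nonneg_ae
      (Filter.Eventually.of_forall fun u => sq_nonneg _) hint]
    have hbad : volume {u | u ∈ Ioo aj b ∧ g u = μ} = 0 := by
      apply Set.Subsingleton.measure_zero
      intro x hx y hy
      exact hmono.injOn (hsub hx.1) (hsub hy.1) (hx.2.trans hy.2.symm)
    have hcover : Ioo aj b ⊆
        (Function.support (fun u => (g u - μ)^2) ∩ Ioo aj b) ∪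
          {u | u ∈ Ioo aj b ∧ g u = μ} := by
      intro u hu
      by_cases h : g u = μ
      · exact Or.inr ⟨hu, h⟩
      · refine Or.inl ⟨?_, hu⟩
        simp only [Function.mem_support]
        intro hcon
        exact h (sub_eq_zero.mp (pow_eq_zero_iff (by norm_num) |>.mp hcon))
    have hle : volume (Ioo aj b) ≤
        volume (Function.support (fun u => (g u - μ)^2) ∩ Ioo aj b) := by
      calc volume (Ioo aj b)
          ≤ volume ((Function.support (fun u => (g u - μ)^2) ∩ Ioo aj b) ∪
              {u | u ∈ Ioo aj b ∧ g u = μ}) := measure_mono hcover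
        _ ≤ volume (Function.support (fun u => (g u - μ)^2) ∩ Ioo aj b) +
              volume {u | u ∈ Ioo aj b ∧ g u = μ} := measure_union_le _ _
        _ = volume (Function.support (fun u => (g u - μ)^2) ∩ Ioo aj b) := by
              rw [hbad, add_zero]
    have h0vol : (0:ENNReal) < volume (Ioo aj b) := by
      rw [hvol]; exact ENNReal.ofReal_pos.mpr hL
    exact lt_of_lt_of_le h0vol hle
  have hηjj_eq : ηjj = L⁻¹ * ∫ u in Ioo aj b, (g u - μ)^2 := by
    rw [hηjj, hc2, hc1, hexpand, hμ]
    field_simp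
    ring
  have hηjjpos : 0 < ηjj := by
    rw [hηjj_eq]; exact mul_pos (inv_pos.mpr hL) hpos
  have hdiff : ηij = ηjj + (trimC g 1 ai (1 - bi) - μ)^2 := by
    rw [hηij, hηjj, hc1]; ring
  have hηijpos : 0 < ηij := by
    rw [hdiff]; exact add_pos_of_pos_of_nonneg hηjjpos (sq_nonneg _)
  have hle : ηjj ≤ ηij := by
    rw [hdiff]; nlinarith [sq_nonneg (trimC g 1 ai (1 - bi) - μ)]
  constructor
  · rw [hηr]; exact div_pos hηjjpos hηijpos
  · rw [hηr]; exact (div_le_one hηijpos).mpr hle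
end

section
/- Let g : (0,1) → ℝ be strictly increasing with g and g² integrable on (0,1), and define c_k(a,b) := (1/(b−a)) ∫_a^b g(u)^k du. Suppose 0 ≤ a_j ≤ a_i < b̄_j ≤ b̄_i ≤ 1 (writing v̄ := 1 − v), and set η(a_i, b̄_j) := c₁(a_i, b̄_i)² − 2·c₁(a_i, b̄_i)·c₁(a_j, b̄_j) + c₂(a_j, b̄_j), η(a_j, b̄_j) := c₂(a_j, b̄_j) − c₁(a_j, b̄_j)², and η_r := η(a_j, b̄_j)/η(a_i, b̄_j). Then c₂(a_j, b̄_j) ≥ η_r · c₁(a_i, b̄_i)². -/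
open MeasureTheory Set

lemma trimC_sq_le (g : ℝ → ℝ)
    (hint1 : IntegrableOn g (Ioo 0 1))
    (hint2 : IntegrableOn (fun u => (g u) ^ 2) (Ioo 0 1))
    {a b : ℝ} (h0 : 0 ≤ a) (hab : a < b) (hb : b ≤ 1) :
    (trimC g 1 a b) ^ 2 ≤ trimC g 2 a b := by
  have hL : (0:ℝ) < b - a := by linarith
  have hsub : Ioo a b ⊆ Ioo 0 1 := Ioo_subset_Ioo h0 hb
  have hg1 : IntegrableOn g (Ioc a b) := by
    rw [integrableOn_Ioc_iff_integrableOn_Ioo]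
    exact hint1.mono_set hsub
  have hg2 : IntegrableOn (fun u => (g u) ^ 2) (Ioc a b) := by
    rw [integrableOn_Ioc_iff_integrableOn_Ioo]
    exact hint2.mono_set hsub
  have hI1 : IntervalIntegrable g volume a b := by
    rw [intervalIntegrable_iff_integrableOn_Ioc_of_le hab.le]; exact hg1
  have hI2 : IntervalIntegrable (fun u => (g u) ^ 2) volume a b := by
    rw [intervalIntegrable_iff_integrableOn_Ioc_of_le hab.le]; exact hg2
  set I1 : ℝ := ∫ u in a..b, g u with hI1def
  set I2 : ℝ := ∫ u in a..b, (g u) ^ 2 with hI2def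
  set c : ℝ := (b - a)⁻¹ * I1 with hcdef
  have key : 0 ≤ ∫ u in a..b, (g u - c) ^ 2 :=
    intervalIntegral.integral_nonneg hab.le (fun u _ => sq_nonneg _)
  have expand : (∫ u in a..b, (g u - c) ^ 2)
      = I2 - (2 * c) * I1 + (b - a) * c ^ 2 := by
    have h : ∀ u, (g u - c) ^ 2 = g u ^ 2 - (2 * c) * g u + c ^ 2 := fun u => by ring
    simp_rw [h]
    rw [intervalIntegral.integral_add (hI2.sub (hI1.const_mul _))
        intervalIntegrable_const,
      intervalIntegral.integral_sub hI2 (hI1.const_mul _),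
      intervalIntegral.integral_const_mul, intervalIntegral.integral_const]
    simp [smul_eq_mul, mul_comm]
    rfl
  have hcL : c * (b - a) = I1 := by
    rw [hcdef]; field_simp
  have hkey : 0 ≤ I2 - (2 * c) * I1 + (b - a) * c ^ 2 := expand ▸ key
  have h1 : trimC g 1 a b = c := by
    simp [trimC, hcdef, hI1def]
  have h2 : trimC g 2 a b = (b - a)⁻¹ * I2 := rfl
  rw [h1, h2, show (b - a)⁻¹ * I2 = I2 / (b - a) by ring, le_div_iff₀ hL]
  have hcI : c * I1 = c ^ 2 * (b - a) := by rw [← hcL]; ring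
  linarith

/-- `c₂(a_j,b̄_j) ≥ η_r · c₁(a_i,b̄_i)²` for a strictly increasing quantile function `g`
and trimming proportions `0 ≤ a_j ≤ a_i < b̄_j ≤ b̄_i ≤ 1`. -/
theorem c2_ge_etaR_mul_c1_sq (g : ℝ → ℝ)
    (hmono : StrictMonoOn g (Ioo 0 1))
    (hint1 : IntegrableOn g (Ioo 0 1))
    (hint2 : IntegrableOn (fun u => (g u) ^ 2) (Ioo 0 1))
    (aj ai bj bi : ℝ)
    (h0 : 0 ≤ aj) (h1 : aj ≤ ai) (h2 : ai < 1 - bj) (h3 : 1 - bj ≤ 1 - bi)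
    (h4 : 1 - bi ≤ 1)
    (ηij ηjj ηr : ℝ)
    (hηij : ηij = (trimC g 1 ai (1 - bi)) ^ 2
        - 2 * trimC g 1 ai (1 - bi) * trimC g 1 aj (1 - bj)
        + trimC g 2 aj (1 - bj))
    (hηjj : ηjj = trimC g 2 aj (1 - bj) - (trimC g 1 aj (1 - bj)) ^ 2)
    (hηr : ηr = ηjj / ηij) :
    ηr * (trimC g 1 ai (1 - bi)) ^ 2 ≤ trimC g 2 aj (1 - bj) := by
  set x := trimC g 1 ai (1 - bi)
  set m := trimC g 1 aj (1 - bj)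
  set s := trimC g 2 aj (1 - bj)
  have hvar : m ^ 2 ≤ s :=
    trimC_sq_le g hint1 hint2 h0 (lt_of_le_of_lt h1 h2) (by linarith)
  have hηnn : 0 ≤ ηij := by nlinarith [sq_nonneg (x - m)]
  rcases eq_or_lt_of_le hηnn with heq | hpos
  · have : ηr = 0 := by rw [hηr, ← heq, div_zero]
    rw [this, zero_mul]
    nlinarith [sq_nonneg m]
  · rw [hηr, div_mul_eq_mul_div, div_le_iff₀ hpos]
    nlinarith [sq_nonneg (s - x * m)]
end

section
/- Let g : (0,1) → ℝ be strictly increasing with g and g² integrable on (0,1), define c_k(a,b) := (1/(b−a)) ∫_a^b g(u)^k du, and suppose 0 ≤ a₂ ≤ a₁ < b̄₂ ≤ b̄₁ ≤ 1 (writing v̄ := 1 − v). Set η(a₁, b̄₂) := c₁(a₁, b̄₁)² − 2·c₁(a₁, b̄₁)·c₁(a₂, b̄₂) + c₂(a₂, b̄₂), η(a₂, b̄₂) := c₂(a₂, b̄₂) − c₁(a₂, b̄₂)², and η_r := η(a₂, b̄₂)/η(a₁, b̄₂). For any real θ and σ, define the population trimmed moments T₁ := θ + σ·c₁(a₁, b̄₁)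 and T₂ := θ² + 2θσ·c₁(a₂, b̄₂) + σ²·c₂(a₂, b̄₂). Then T₂ − η_r·T₁² ≥ 0. -/
open MeasureTheory Set

lemma trimC_var_nonneg (g : ℝ → ℝ) (a b : ℝ) (hab : a < b)
    (h1 : IntervalIntegrable g volume a b)
    (h2 : IntervalIntegrable (fun u => (g u) ^ 2) volume a b) :
    (trimC g 1 a b) ^ 2 ≤ trimC g 2 a b := by
  set L : ℝ := b - a with hL
  have hLpos : 0 < L := by simp [hL]; linarith
  set m : ℝ := L⁻¹ * ∫ u in a..b, (g u) ^ 1 with hm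
  have hgi : IntervalIntegrable (fun u => (2 * m) * g u) volume a b := h1.const_mul _
  have hci : IntervalIntegrable (fun _ : ℝ => m ^ 2) volume a b :=
    intervalIntegrable_const
  have hnn : 0 ≤ ∫ u in a..b, (g u - m) ^ 2 := by
    apply intervalIntegral.integral_nonneg (le_of_lt hab)
    intro u _; positivity
  have hexp : (∫ u in a..b, (g u - m) ^ 2)
      = (∫ u in a..b, (g u) ^ 2) - (2 * m) * (∫ u in a..b, g u) + m ^ 2 * L := by
    have : (fun u => (g u - m) ^ 2)
        = fun u => (g u) ^ 2 - (2 * m) * g u + m ^ 2 := by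
      funext u; ring
    rw [this, intervalIntegral.integral_add (h2.sub hgi) hci,
      intervalIntegral.integral_sub h2 hgi,
      intervalIntegral.integral_const_mul, intervalIntegral.integral_const]
    simp only [smul_eq_mul]
    ring
  have hg1 : (∫ u in a..b, (g u) ^ 1) = ∫ u in a..b, g u := by
    simp
  have hmL : (∫ u in a..b, g u) = m * L := by
    rw [hm, hg1]
    field_simp
  rw [hexp, hmL] at hnn
  have key : m ^ 2 * L ≤ ∫ u in a..b, (g u) ^ 2 := by nlinarith
  have hm2 : trimC g 1 a b = m := by rw [trimC, hm]
  have hLne : L ≠ 0 := ne_of_gt hLpos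
  have hLinv : (0:ℝ) ≤ L⁻¹ := le_of_lt (inv_pos.mpr hLpos)
  have hmsq : m ^ 2 = L⁻¹ * (m ^ 2 * L) := by field_simp
  rw [hm2, trimC, ← hL, hmsq]
  exact mul_le_mul_of_nonneg_left key hLinv

/-- For the location-scale population trimmed moments
`T₁ = θ + σ·c₁(a₁,b̄₁)` and `T₂ = θ² + 2θσ·c₁(a₂,b̄₂) + σ²·c₂(a₂,b̄₂)`, one has
`T₂ - η_r·T₁² ≥ 0` for any real `θ` and `σ`, with
`η_r = η(a₂,b̄₂)/η(a₁,b̄₂)` and `0 ≤ a₂ ≤ a₁ < b̄₂ ≤ b̄₁ ≤ 1`. -/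
theorem T2_sub_etaR_T1_sq_nonneg (g : ℝ → ℝ)
    (hmono : StrictMonoOn g (Ioo 0 1))
    (hint1 : IntegrableOn g (Ioo 0 1))
    (hint2 : IntegrableOn (fun u => (g u) ^ 2) (Ioo 0 1))
    (a1 a2 b1 b2 : ℝ)
    (h0 : 0 ≤ a2) (h1 : a2 ≤ a1) (h2 : a1 < 1 - b2) (h3 : 1 - b2 ≤ 1 - b1)
    (h4 : 1 - b1 ≤ 1)
    (η12 η22 ηr : ℝ)
    (hη12 : η12 = (trimC g 1 a1 (1 - b1)) ^ 2
        - 2 * trimC g 1 a1 (1 - b1) * trimC g 1 a2 (1 - b2)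
        + trimC g 2 a2 (1 - b2))
    (hη22 : η22 = trimC g 2 a2 (1 - b2) - (trimC g 1 a2 (1 - b2)) ^ 2)
    (hηr : ηr = η22 / η12)
    (θ σ : ℝ) (T1 T2 : ℝ)
    (hT1 : T1 = θ + σ * trimC g 1 a1 (1 - b1))
    (hT2 : T2 = θ ^ 2 + 2 * θ * σ * trimC g 1 a2 (1 - b2)
        + σ ^ 2 * trimC g 2 a2 (1 - b2)) :
    0 ≤ T2 - ηr * T1 ^ 2 := by
  have hab : a2 < 1 - b2 := lt_of_le_of_lt h1 h2
  have hsub : Ioc a2 (1 - b2) ⊆ Ioc (0:ℝ) 1 :=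
    Ioc_subset_Ioc h0 (le_trans h3 h4)
  have hI1 : IntervalIntegrable g volume a2 (1 - b2) := by
    rw [intervalIntegrable_iff_integrableOn_Ioc_of_le (le_of_lt hab)]
    exact ((integrableOn_Ioc_iff_integrableOn_Ioo).mpr hint1).mono_set hsub
  have hI2 : IntervalIntegrable (fun u => (g u) ^ 2) volume a2 (1 - b2) := by
    rw [intervalIntegrable_iff_integrableOn_Ioc_of_le (le_of_lt hab)]
    exact ((integrableOn_Ioc_iff_integrableOn_Ioo).mpr hint2).mono_set hsub
  have hvar : (trimC g 1 a2 (1 - b2)) ^ 2 ≤ trimC g 2 a2 (1 - b2) :=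
    trimC_var_nonneg g a2 (1 - b2) hab hI1 hI2
  set A := trimC g 1 a1 (1 - b1)
  set B := trimC g 1 a2 (1 - b2)
  set C := trimC g 2 a2 (1 - b2)
  have hD : 0 ≤ C - B ^ 2 := by linarith
  have hη22nn : 0 ≤ η22 := by rw [hη22]; linarith
  have hη12nn : 0 ≤ η12 := by nlinarith [sq_nonneg (A - B)]
  rcases eq_or_lt_of_le hη12nn with heq | hpos
  · have : ηr = 0 := by rw [hηr, ← heq, div_zero]
    rw [this, hT2]
    nlinarith [sq_nonneg (θ + σ * B), sq_nonneg σ]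
  · have hne : η12 ≠ 0 := ne_of_gt hpos
    have hmul : ηr * η12 = η22 := by rw [hηr]; field_simp
    have key : 0 ≤ η12 * (T2 - ηr * T1 ^ 2) := by
      have : η12 * (T2 - ηr * T1 ^ 2) = η12 * T2 - η22 * T1 ^ 2 := by
        nlinarith [hmul]
      rw [this, hη12, hη22, hT1, hT2]
      nlinarith [sq_nonneg (σ * (C - B ^ 2) - (A - B) * (θ + σ * B))]
    nlinarith [key, hpos]
end

section
/- Define Δ(u) := log(−log u) for u ∈ (0,1) and κ_k(a,b) := (1/(b−a)) ∫_a^b Δ(u)^k du for 0 ≤ a < b ≤ 1 (the integrals exist since Δ^k is integrable on (0,1)). If the trimming proportions satisfy 0 ≤ a_j ≤ a_i < b̄_j ≤ b̄_i ≤ 1 (writing v̄ := 1 − v), then ζ(a_i, b̄_j) := κ₁(a_i, b̄_i)² − 2·κ₁(a_i, b̄_i)·κ₁(a_j, b̄_j) + κ₂(a_j, b̄_j) > 0. -/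
open MeasureTheory Set

/-- `Δ(u) = log(-log u)`. -/
noncomputable def DeltaF (u : ℝ) : ℝ := Real.log (-Real.log u)

/-- `κ_k(a,b) = (1/(b-a)) ∫_a^b Δ(u)^k du`. -/
noncomputable def kappaF (k : ℕ) (a b : ℝ) : ℝ :=
  (b - a)⁻¹ * ∫ u in a..b, (DeltaF u) ^ k

-- |log x| ≤ 4 (x^{1/4} + x^{-1/4})
lemma abs_log_le (x : ℝ) (hx : 0 < x) :
    |Real.log x| ≤ 4 * (x ^ ((4:ℝ)⁻¹) + x ^ (-(4:ℝ)⁻¹)) := by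
  have hp : (0:ℝ) ≤ x ^ ((4:ℝ)⁻¹) := Real.rpow_nonneg hx.le _
  have hq : (0:ℝ) ≤ x ^ (-(4:ℝ)⁻¹) := Real.rpow_nonneg hx.le _
  have h1 : Real.log (x ^ ((4:ℝ)⁻¹)) ≤ x ^ ((4:ℝ)⁻¹) - 1 :=
    Real.log_le_sub_one_of_pos (Real.rpow_pos_of_pos hx _)
  have h2 : Real.log (x ^ (-(4:ℝ)⁻¹)) ≤ x ^ (-(4:ℝ)⁻¹) - 1 :=
    Real.log_le_sub_one_of_pos (Real.rpow_pos_of_pos hx _)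
  rw [Real.log_rpow hx] at h1 h2
  rw [abs_le]
  constructor <;> nlinarith

-- the dominating function
noncomputable def gBound (u : ℝ) : ℝ := 64 * u ^ (-(4:ℝ)⁻¹) + 32 * (1 - u) ^ (-(2:ℝ)⁻¹)

lemma deltaSq_le (u : ℝ) (hu : u ∈ Ioo (0:ℝ) 1) : (DeltaF u) ^ 2 ≤ gBound u := by
  obtain ⟨hu0, hu1⟩ := hu
  set x := -Real.log u with hxdef
  have hx : 0 < x := by
    simp only [hxdef, neg_pos]
    exact Real.log_neg hu0 hu1
  -- Δ u = log x, and (log x)^2 ≤ 16 (x^{1/4}+x^{-1/4})^2 ≤ 32 (x^{1/2} + x^{-1/2})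
  have habs := abs_log_le x hx
  have hp : (0:ℝ) ≤ x ^ ((4:ℝ)⁻¹) := Real.rpow_nonneg hx.le _
  have hq : (0:ℝ) ≤ x ^ (-(4:ℝ)⁻¹) := Real.rpow_nonneg hx.le _
  have hsq : (DeltaF u) ^ 2 ≤ 32 * ((x ^ ((4:ℝ)⁻¹))^2 + (x ^ (-(4:ℝ)⁻¹))^2) := by
    have : (DeltaF u)^2 = |Real.log x|^2 := by rw [sq_abs]; rfl
    rw [this]
    nlinarith [sq_nonneg (x ^ ((4:ℝ)⁻¹) - x ^ (-(4:ℝ)⁻¹)), abs_nonneg (Real.log x)]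
  have e1 : (x ^ ((4:ℝ)⁻¹))^2 = x ^ ((2:ℝ)⁻¹) := by
    rw [← Real.rpow_natCast (x ^ ((4:ℝ)⁻¹)) 2, ← Real.rpow_mul hx.le]; norm_num
  have e2 : (x ^ (-(4:ℝ)⁻¹))^2 = x ^ (-(2:ℝ)⁻¹) := by
    rw [← Real.rpow_natCast (x ^ (-(4:ℝ)⁻¹)) 2, ← Real.rpow_mul hx.le]; norm_num
  rw [e1, e2] at hsq
  -- x^{1/2} ≤ 2 u^{-1/4}
  have hb1 : x ^ ((2:ℝ)⁻¹) ≤ 2 * u ^ (-(4:ℝ)⁻¹) := by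
    have hxle : x ≤ 2 * u ^ (-(2:ℝ)⁻¹) := by
      have h1 : Real.log (u ^ (-(2:ℝ)⁻¹)) ≤ u ^ (-(2:ℝ)⁻¹) - 1 :=
        Real.log_le_sub_one_of_pos (Real.rpow_pos_of_pos hu0 _)
      rw [Real.log_rpow hu0] at h1
      have : x = -Real.log u := rfl
      nlinarith [Real.rpow_nonneg hu0.le (-(2:ℝ)⁻¹)]
    calc x ^ ((2:ℝ)⁻¹) ≤ (2 * u ^ (-(2:ℝ)⁻¹)) ^ ((2:ℝ)⁻¹) :=
          Real.rpow_le_rpow hx.le hxle (by norm_num)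
      _ = 2 ^ ((2:ℝ)⁻¹) * (u ^ (-(2:ℝ)⁻¹)) ^ ((2:ℝ)⁻¹) :=
          Real.mul_rpow (by norm_num) (Real.rpow_nonneg hu0.le _)
      _ ≤ 2 * u ^ (-(4:ℝ)⁻¹) := by
          rw [← Real.rpow_mul hu0.le]
          have he : (-(2:ℝ)⁻¹ * (2:ℝ)⁻¹) = (-(4:ℝ)⁻¹) := by norm_num
          rw [he]
          have h2 : (2:ℝ) ^ ((2:ℝ)⁻¹) ≤ 2 := by
            calc (2:ℝ) ^ ((2:ℝ)⁻¹) ≤ (2:ℝ) ^ (1:ℝ) :=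
                  Real.rpow_le_rpow_of_exponent_le (by norm_num) (by norm_num)
              _ = 2 := Real.rpow_one 2
          exact mul_le_mul_of_nonneg_right h2 (Real.rpow_nonneg hu0.le _)
  -- x^{-1/2} ≤ (1-u)^{-1/2}
  have hb2 : x ^ (-(2:ℝ)⁻¹) ≤ (1 - u) ^ (-(2:ℝ)⁻¹) := by
    have h1u : (0:ℝ) < 1 - u := by linarith
    have hge : 1 - u ≤ x := by
      have := Real.log_le_sub_one_of_pos hu0
      simp only [hxdef]; linarith
    exact Real.rpow_le_rpow_of_nonpos h1u hge (by norm_num)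
  unfold gBound
  nlinarith

lemma deltaF_measurable : Measurable DeltaF :=
  Real.measurable_log.comp Real.measurable_log.neg

lemma gBound_intervalIntegrable : IntervalIntegrable gBound volume 0 1 := by
  have h1 : IntervalIntegrable (fun u : ℝ => 64 * u ^ (-(4:ℝ)⁻¹)) volume 0 1 :=
    (intervalIntegral.intervalIntegrable_rpow' (by norm_num)).const_mul 64
  have h2 : IntervalIntegrable (fun u : ℝ => (1 - u) ^ (-(2:ℝ)⁻¹)) volume 0 1 := by
    have h0 : IntervalIntegrable (fun u : ℝ => u ^ (-(2:ℝ)⁻¹)) volume 0 1 :=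
      intervalIntegral.intervalIntegrable_rpow' (by norm_num)
    have := (h0.comp_sub_left 1).symm
    simpa using this
  exact h1.add (h2.const_mul 32)

lemma deltaSq_intervalIntegrable : IntervalIntegrable (fun u => DeltaF u ^ 2) volume 0 1 := by
  apply gBound_intervalIntegrable.mono_fun'
  · exact ((deltaF_measurable.pow_const 2).aestronglyMeasurable).restrict
  · rw [uIoc_of_le (by norm_num : (0:ℝ) ≤ 1)]
    rw [Filter.EventuallyLE, ae_restrict_iff' measurableSet_Ioc]
    filter_upwards with u
    intro hu
    rcases eq_or_lt_of_le hu.2 with h1 | h1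
    · subst h1
      have hg : (0:ℝ) ≤ gBound 1 := by
        unfold gBound
        have h0 : ((1:ℝ) - 1) ^ (-(2:ℝ)⁻¹) = 0 := by
          rw [sub_self]; exact Real.zero_rpow (by norm_num)
        rw [h0, Real.one_rpow]
        norm_num
      simpa [DeltaF, Real.log_one, Real.log_zero] using hg
    · have hb := deltaSq_le u ⟨hu.1, h1⟩
      calc ‖DeltaF u ^ 2‖ = DeltaF u ^ 2 := by
            rw [Real.norm_eq_abs, abs_of_nonneg (sq_nonneg _)]
        _ ≤ gBound u := hb


lemma delta_intervalIntegrable : IntervalIntegrable DeltaF volume 0 1 := by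
  apply (deltaSq_intervalIntegrable.add (intervalIntegrable_const (c := (1:ℝ)))).mono_fun'
  · exact deltaF_measurable.aestronglyMeasurable.restrict
  · filter_upwards with u
    have : ‖DeltaF u‖ = |DeltaF u| := rfl
    rw [this]
    nlinarith [sq_abs (DeltaF u), abs_nonneg (DeltaF u), sq_nonneg (|DeltaF u| - 1)]

lemma deltaF_strictAntiOn : StrictAntiOn DeltaF (Ioo 0 1) := by
  intro u hu v hv huv
  unfold DeltaF
  have h1 : Real.log v < Real.log u → False := fun h =>
    absurd (Real.log_lt_log hu.1 huv) (lt_asymm h)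
  have hlu : 0 < -Real.log u := by simpa using Real.log_neg hu.1 hu.2
  apply Real.log_lt_log
  · simpa using Real.log_neg hv.1 hv.2
  · simp only [neg_lt_neg_iff]
    exact Real.log_lt_log hu.1 huv

lemma kappa_sq_lt (a b : ℝ) (h0 : 0 ≤ a) (hab : a < b) (h1 : b ≤ 1) :
    kappaF 1 a b ^ 2 < kappaF 2 a b := by
  have hsub : uIcc a b ⊆ uIcc (0:ℝ) 1 := by
    rw [uIcc_of_le hab.le, uIcc_of_le (by norm_num : (0:ℝ) ≤ 1)]
    exact Icc_subset_Icc h0 h1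
  have hΔ : IntervalIntegrable DeltaF volume a b := delta_intervalIntegrable.mono_set hsub
  have hΔ2 : IntervalIntegrable (fun u => DeltaF u ^ 2) volume a b :=
    deltaSq_intervalIntegrable.mono_set hsub
  set L : ℝ := b - a with hL
  have hLpos : 0 < L := by simp [hL]; linarith
  set m : ℝ := kappaF 1 a b with hm
  have hint1 : ∫ u in a..b, DeltaF u = L * m := by
    have : (∫ u in a..b, DeltaF u ^ 1) = ∫ u in a..b, DeltaF u := by
      simp
    rw [hm, kappaF, this]
    field_simp
    rw [hL, mul_div_assoc, div_self (sub_ne_zero.mpr hab.ne'), mul_one]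
  -- integrability of (Δ - m)^2
  have hfi : IntervalIntegrable (fun u => (DeltaF u - m) ^ 2) volume a b := by
    have : (fun u => (DeltaF u - m) ^ 2)
        = fun u => (DeltaF u ^ 2 - (2 * m) * DeltaF u) + m ^ 2 := by
      funext u; ring
    rw [this]
    exact ((hΔ2.sub ((hΔ.const_mul (2 * m)))).add intervalIntegrable_const)
  -- positivity of the variance integral
  have hpos : 0 < ∫ u in a..b, (DeltaF u - m) ^ 2 := by
    rw [intervalIntegral.integral_pos_iff_support_of_nonneg_ae
      (Filter.Eventually.of_forall fun u => sq_nonneg _) hfi]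
    refine ⟨hab, ?_⟩
    set S : Set ℝ := {u | u ∈ Ioo a b ∧ DeltaF u = m} with hS
    have hSsub : S.Subsingleton := by
      intro u hu v hv
      have hu' : u ∈ Ioo (0:ℝ) 1 := ⟨lt_of_le_of_lt h0 hu.1.1, lt_of_lt_of_le hu.1.2 h1⟩
      have hv' : v ∈ Ioo (0:ℝ) 1 := ⟨lt_of_le_of_lt h0 hv.1.1, lt_of_lt_of_le hv.1.2 h1⟩
      by_contra hne
      rcases lt_or_gt_of_ne hne with h | h
      · exact absurd (hv.2 ▸ hu.2 ▸ deltaF_strictAntiOn hu' hv' h) (lt_irrefl _)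
      · exact absurd (hv.2 ▸ hu.2 ▸ deltaF_strictAntiOn hv' hu' h) (lt_irrefl _)
    have hS0 : volume S = 0 := hSsub.measure_zero _
    have hcover : Ioo a b ⊆ (Function.support (fun u => (DeltaF u - m) ^ 2) ∩ Ioc a b) ∪ S := by
      intro u hu
      by_cases hΔm : DeltaF u = m
      · exact Or.inr ⟨hu, hΔm⟩
      · refine Or.inl ⟨?_, Ioo_subset_Ioc_self hu⟩
        simp only [Function.mem_support]
        exact pow_ne_zero _ (sub_ne_zero_of_ne hΔm)
    have hIoo : 0 < volume (Ioo a b) := by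
      rw [Real.volume_Ioo]
      exact ENNReal.ofReal_pos.mpr (by linarith)
    by_contra hmeas
    push_neg at hmeas
    have hz : volume (Function.support (fun u => (DeltaF u - m) ^ 2) ∩ Ioc a b) = 0 :=
      le_antisymm hmeas zero_le
    have hle : volume (Ioo a b)
        ≤ volume (Function.support (fun u => (DeltaF u - m) ^ 2) ∩ Ioc a b) + volume S :=
      (measure_mono hcover).trans (measure_union_le _ _)
    rw [hz, hS0] at hle
    simp at hle
    exact absurd hle (not_le.mpr hab)
  -- expand
  have hexp : (∫ u in a..b, (DeltaF u - m) ^ 2)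
      = (∫ u in a..b, DeltaF u ^ 2) - 2 * m * (∫ u in a..b, DeltaF u) + L * m ^ 2 := by
    have heq : (fun u => (DeltaF u - m) ^ 2)
        = fun u => (DeltaF u ^ 2 - (2 * m) * DeltaF u) + m ^ 2 := by
      funext u; ring
    rw [heq, intervalIntegral.integral_add (hΔ2.sub (hΔ.const_mul (2 * m)))
        intervalIntegrable_const,
      intervalIntegral.integral_sub hΔ2 (hΔ.const_mul (2 * m)),
      intervalIntegral.integral_const_mul, intervalIntegral.integral_const, smul_eq_mul]
    try ring
  have hk2 : (∫ u in a..b, DeltaF u ^ 2) = L * kappaF 2 a b := by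
    rw [kappaF]; field_simp
    rw [hL, mul_div_assoc, div_self (sub_ne_zero.mpr hab.ne'), mul_one]
  rw [hexp, hint1, hk2] at hpos
  have : 0 < L * (kappaF 2 a b - m ^ 2) := by ring_nf; ring_nf at hpos; linarith
  nlinarith


/-- Positivity of `ζ(a_i,b̄_j) = κ₁(a_i,b̄_i)² - 2κ₁(a_i,b̄_i)κ₁(a_j,b̄_j) + κ₂(a_j,b̄_j)`
under the trimming inequality `0 ≤ a_j ≤ a_i < b̄_j ≤ b̄_i ≤ 1`. -/
theorem zeta_pos (aj ai bj bi : ℝ)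
    (h0 : 0 ≤ aj) (h1 : aj ≤ ai) (h2 : ai < 1 - bj) (h3 : 1 - bj ≤ 1 - bi)
    (h4 : 1 - bi ≤ 1) :
    0 < (kappaF 1 ai (1 - bi)) ^ 2
        - 2 * kappaF 1 ai (1 - bi) * kappaF 1 aj (1 - bj)
        + kappaF 2 aj (1 - bj) := by
  have hB := kappa_sq_lt aj (1 - bj) h0 (lt_of_le_of_lt h1 h2) (by linarith)
  nlinarith [sq_nonneg (kappaF 1 ai (1 - bi) - kappaF 1 aj (1 - bj))]
end

section
/- Let κ₁⁽¹⁾, κ₁⁽²⁾, κ₂⁽²⁾, T₁, T₂ be real numbers, set ζ₁₂ := (κ₁⁽¹⁾)² − 2·κ₁⁽¹⁾·κ₁⁽²⁾ + κ₂⁽²⁾ and ζ₂₂ := κ₂⁽²⁾ − (κ₁⁽²⁾)², and suppose ζ₁₂ > 0 and set ζ_r := ζ₂₂/ζ₁₂. If β ∈ ℝ and σ > 0 satisfy the matching system T₁ = log σ − β·κ₁⁽¹⁾ and T₂ = (log σ)² − 2β·(log σ)·κ₁⁽²⁾ + β²·κ₂⁽²⁾, then T₂ − ζ_r·T₁² ≥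 0 and β = β_ST + β_FT or β = β_ST − β_FT, where β_FT := (1/√ζ₁₂)·√(T₂ − ζ_r·T₁²) and β_ST := T₁·(κ₁⁽²⁾ − κ₁⁽¹⁾)/ζ₁₂; moreover σ = exp(T₁ + β·κ₁⁽¹⁾). -/
/-- Closed-form solution of the Fréchet trimmed log-moment matching system:
if `T₁ = log σ - β·κ₁⁽¹⁾` and `T₂ = (log σ)² - 2β·(log σ)·κ₁⁽²⁾ + β²·κ₂⁽²⁾`, with
`ζ₁₂ > 0` and `σ > 0`, then `T₂ - ζ_r·T₁² ≥ 0`, `β = β_ST ± β_FT`, and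
`σ = exp(T₁ + β·κ₁⁽¹⁾)`. -/
theorem frechet_MTM_closed_form
    (κ11 κ12 κ22 T1 T2 β σ : ℝ)
    (ζ12 ζ22 ζr βFT βST : ℝ)
    (hζ12 : ζ12 = κ11 ^ 2 - 2 * κ11 * κ12 + κ22)
    (hζ22 : ζ22 = κ22 - κ12 ^ 2)
    (hpos : 0 < ζ12)
    (hζr : ζr = ζ22 / ζ12)
    (hFT : βFT = (1 / Real.sqrt ζ12) * Real.sqrt (T2 - ζr * T1 ^ 2))
    (hST : βST = T1 * (κ12 - κ11) / ζ12)
    (hσ : 0 < σ)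
    (hm1 : T1 = Real.log σ - β * κ11)
    (hm2 : T2 = (Real.log σ) ^ 2 - 2 * β * Real.log σ * κ12 + β ^ 2 * κ22) :
    0 ≤ T2 - ζr * T1 ^ 2
      ∧ (β = βST + βFT ∨ β = βST - βFT)
      ∧ σ = Real.exp (T1 + β * κ11) := by
  have hL : Real.log σ = T1 + β * κ11 := by linarith
  set A : ℝ := T1 * (κ11 - κ12) + β * ζ12 with hA
  have hne : ζ12 ≠ 0 := ne_of_gt hpos
  have key : T2 - ζr * T1 ^ 2 = A ^ 2 / ζ12 := by
    subst hζr hζ22 hζ12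
    rw [hm2, hL, hA]
    rw [div_mul_eq_mul_div, sub_div' hne, div_left_inj' hne]
    ring
  have h0 : 0 ≤ T2 - ζr * T1 ^ 2 := by
    rw [key]; positivity
  refine ⟨h0, ?_, ?_⟩
  · have hsq : Real.sqrt (T2 - ζr * T1 ^ 2) = |A| / Real.sqrt ζ12 := by
      rw [key, Real.sqrt_div (sq_nonneg A), Real.sqrt_sq_eq_abs]
    have hsp : 0 < Real.sqrt ζ12 := Real.sqrt_pos.mpr hpos
    have hmul : Real.sqrt ζ12 * Real.sqrt ζ12 = ζ12 := Real.mul_self_sqrt hpos.le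
    have hFT' : βFT = |A| / ζ12 := by
      rw [hFT, hsq, ← hmul]; field_simp
      rw [Real.sqrt_sq hsp.le]
    have hdiff : β - βST = A / ζ12 := by
      rw [hST, hA]; field_simp; ring
    rcases abs_cases A with ⟨h, _⟩ | ⟨h, _⟩
    · left; rw [hFT', h]; linarith [hdiff]
    · right; rw [hFT', h]
      have : β - βST = A / ζ12 := hdiff
      field_simp at this ⊢
      linarith
  · rw [← hL, Real.exp_log hσ]
end

section
/- Let 0 ≤ a₁ < b̄₁ ≤ 1 with b̄₁ := 1 − b₁ and a₁ + b₁ < 1, and let G : [0,1] → ℝ be continuously differentiable on an open set containing [a₁, b̄₁]. With K(w,v) := min{w,v} − w·v, c_k := (1/(b̄₁ − a₁)) ∫_{a₁}^{b̄₁} G(u)^k du, and Γ := (1 − a₁ − b₁)^{−2}, the following identity holds: Γ·∫_{a₁}^{b̄₁} ∫_{a₁}^{b̄₁} K(w,v)·G'(v)·G'(w) dv dw = Γ·{ a₁(1−a₁)·G(a₁)² + b₁(1−b₁)·G(b̄₁)² − 2a₁b₁·G(a₁)·G(b̄₁) − 2(1 − a₁ − b₁)·[a₁·G(a₁) + b₁·G(b̄₁)]·c₁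 − Γ^{−1}·c₁² + (1 − a₁ − b₁)·c₂ }. -/
open MeasureTheory Set intervalIntegral

/-- Closed-form expression `Λ₁₁₁` for the asymptotic variance of the first trimmed
moment: single-integration formula for
`Γ·∫∫ K(w,v) G'(v) G'(w) dv dw` over `[a₁,b̄₁]²`. -/
theorem Lambda111_closed_form (a1 b1 : ℝ)
    (h0 : 0 ≤ a1) (h1 : a1 < 1 - b1) (h2 : 1 - b1 ≤ 1) (hab : a1 + b1 < 1)
    (G : ℝ → ℝ) (U : Set ℝ) (hU : IsOpen U) (hsub : Icc a1 (1 - b1) ⊆ U)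
    (hG : ContDiffOn ℝ 1 G U)
    (Γ c1 c2 : ℝ)
    (hΓ : Γ = ((1 - a1 - b1) ^ 2)⁻¹)
    (hc1 : c1 = ((1 - b1) - a1)⁻¹ * ∫ u in a1..(1 - b1), G u)
    (hc2 : c2 = ((1 - b1) - a1)⁻¹ * ∫ u in a1..(1 - b1), (G u) ^ 2) :
    Γ * ∫ w in a1..(1 - b1), ∫ v in a1..(1 - b1),
        (min w v - w * v) * deriv G v * deriv G w
      = Γ * ( a1 * (1 - a1) * (G a1) ^ 2
        + b1 * (1 - b1) * (G (1 - b1)) ^ 2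
        - 2 * a1 * b1 * G a1 * G (1 - b1)
        - 2 * (1 - a1 - b1) * (a1 * G a1 + b1 * G (1 - b1)) * c1
        - Γ⁻¹ * c1 ^ 2
        + (1 - a1 - b1) * c2 ) := by
  set b : ℝ := 1 - b1 with hbdef
  have hab' : a1 < b := h1
  have hd : b - a1 ≠ 0 := sub_ne_zero.mpr (ne_of_gt hab')
  have haI : a1 ∈ Icc a1 b := ⟨le_rfl, le_of_lt hab'⟩
  have hbI : b ∈ Icc a1 b := ⟨le_of_lt hab', le_rfl⟩
  -- derivative and continuity facts
  have hGc : ContinuousOn G U := hG.continuousOn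
  have hder : ∀ x ∈ U, HasDerivAt G (deriv G x) x := fun x hx =>
    ((hG.contDiffAt (hU.mem_nhds hx)).differentiableAt one_ne_zero).hasDerivAt
  have hderiv_cont : ContinuousOn (deriv G) U :=
    (hG.continuousOn_derivWithin hU.uniqueDiffOn le_rfl).congr
      (fun x hx => (derivWithin_of_isOpen hU hx).symm)
  have hsubU : ∀ {x y : ℝ}, x ∈ Icc a1 b → y ∈ Icc a1 b → uIcc x y ⊆ U :=
    fun hx hy => (uIcc_subset_Icc hx hy).trans hsub
  have hInt : ∀ (f : ℝ → ℝ), ContinuousOn f U → ∀ {x y : ℝ}, x ∈ Icc a1 b → y ∈ Icc a1 b →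
      IntervalIntegrable f volume x y := fun f hf x y hx hy =>
    (hf.mono (hsubU hx hy)).intervalIntegrable
  set I : ℝ := ∫ u in a1..b, G u with hI
  set J : ℝ := ∫ u in a1..b, (G u) ^ 2 with hJ
  set A : ℝ → ℝ := fun x => ∫ u in a1..x, G u with hAdef
  have hA : ∀ x ∈ Icc a1 b, HasDerivAt A (G x) x := fun x hx =>
    intervalIntegral.integral_hasDerivAt_right (hInt G hGc haI hx)
      (hGc.stronglyMeasurableAtFilter hU x (hsub hx))
      (hGc.continuousAt (hU.mem_nhds (hsub hx)))
  -- inner integral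
  have inner_eq : ∀ w ∈ Icc a1 b,
      (∫ v in a1..b, (min w v - w * v) * deriv G v)
        = -(a1 * G a1) * (1 - w) + (b1 * G b + I) * w - A w := by
    intro w hw
    have hwa : a1 ≤ w := hw.1
    have hwb : w ≤ b := hw.2
    have hfc : ContinuousOn (fun v => (min w v - w * v) * deriv G v) U :=
      (((continuous_const.min continuous_id).sub
        (continuous_const.mul continuous_id)).continuousOn.mul hderiv_cont)
    have hsplit := integral_add_adjacent_intervals
      (hInt _ hfc haI hw) (hInt _ hfc hw hbI)
    -- piece 1
    have p1 : (∫ v in a1..w, (min w v - w * v) * deriv G v)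
        = (1 - w) * (w * G w - a1 * G a1 - A w) := by
      have e1 : (∫ v in a1..w, (min w v - w * v) * deriv G v)
          = ∫ v in a1..w, (1 - w) * (v * deriv G v) := by
        refine integral_congr fun v hv => ?_
        rw [uIcc_of_le hwa] at hv
        rw [min_eq_right hv.2]; ring
      rw [e1, intervalIntegral.integral_const_mul]
      have ibp := integral_mul_deriv_eq_deriv_mul
        (u := fun x : ℝ => x) (u' := fun _ => (1:ℝ)) (v := G) (v' := deriv G)
        (fun x _ => hasDerivAt_id x)
        (fun x hx => hder x (hsubU haI hw hx))
        intervalIntegrable_const (hInt _ hderiv_cont haI hw)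
      simp only [one_mul] at ibp
      rw [ibp]
    -- piece 2
    have p2 : (∫ v in w..b, (min w v - w * v) * deriv G v)
        = w * (b1 * G b - (1 - w) * G w + (∫ v in w..b, G v)) := by
      have e2 : (∫ v in w..b, (min w v - w * v) * deriv G v)
          = ∫ v in w..b, w * ((1 - v) * deriv G v) := by
        refine integral_congr fun v hv => ?_
        rw [uIcc_of_le hwb] at hv
        rw [min_eq_left hv.1]; ring
      rw [e2, intervalIntegral.integral_const_mul]
      have ibp := integral_mul_deriv_eq_deriv_mul
        (u := fun x : ℝ => 1 - x) (u' := fun _ => (-1:ℝ)) (v := G) (v' := deriv G)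
        (fun x _ => by simpa using (hasDerivAt_id x).const_sub 1)
        (fun x hx => hder x (hsubU hw hbI hx))
        intervalIntegrable_const (hInt _ hderiv_cont hw hbI)
      rw [ibp]
      have h1b : (1 : ℝ) - b = b1 := by rw [hbdef]; ring
      simp only [neg_one_mul, intervalIntegral.integral_neg, h1b]
      ring
    have hsplitG : A w + (∫ v in w..b, G v) = I :=
      integral_add_adjacent_intervals (hInt G hGc haI hw) (hInt G hGc hw hbI)
    rw [← hsplit, p1, p2]
    have : (∫ v in w..b, G v) = I - A w := by linarith
    rw [this]; ring
  -- rewrite outer integrand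
  have outer_congr : (∫ w in a1..b, ∫ v in a1..b, (min w v - w * v) * deriv G v * deriv G w)
      = ∫ w in a1..b, (-(a1 * G a1) * (1 - w) + (b1 * G b + I) * w - A w) * deriv G w := by
    refine integral_congr fun w hw => ?_
    rw [uIcc_of_le (le_of_lt hab')] at hw
    rw [show (∫ v in a1..b, (min w v - w * v) * deriv G v * deriv G w)
        = (∫ v in a1..b, (min w v - w * v) * deriv G v) * deriv G w from
        intervalIntegral.integral_mul_const _ _, inner_eq w hw]
  -- integration by parts on the outer integral
  set C : ℝ := a1 * G a1 + (b1 * G b + I) with hC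
  have hu : ∀ x ∈ uIcc a1 b, HasDerivAt
      (fun w => -(a1 * G a1) * (1 - w) + (b1 * G b + I) * w - A w) (C - G x) x := by
    intro x hx
    rw [uIcc_of_le (le_of_lt hab')] at hx
    have h := (((hasDerivAt_id x).const_sub 1).const_mul (-(a1 * G a1))).add
      (((hasDerivAt_id x).const_mul (b1 * G b + I)))
    have h2 := h.sub (hA x hx)
    refine h2.congr_deriv ?_
    rw [hC]; ring
  have huint : IntervalIntegrable (fun x => C - G x) volume a1 b :=
    hInt _ (continuousOn_const.sub hGc) haI hbI
  have ibp2 := integral_mul_deriv_eq_deriv_mul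
    (u := fun w => -(a1 * G a1) * (1 - w) + (b1 * G b + I) * w - A w)
    (u' := fun x => C - G x) (v := G) (v' := deriv G)
    hu (fun x hx => hder x (hsubU haI hbI hx))
    huint (hInt _ hderiv_cont haI hbI)
  have hlast : (∫ x in a1..b, (C - G x) * G x) = C * I - J := by
    have e : (∫ x in a1..b, (C - G x) * G x)
        = ∫ x in a1..b, (C * G x - (G x) ^ 2) := by
      refine integral_congr fun x _ => ?_; ring
    rw [e, integral_sub (f := fun x => C * G x) (g := fun x => (G x) ^ 2) ((continuousOn_const.mul hGc).mono (hsubU haI hbI)).intervalIntegrable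
      ((hGc.pow 2).mono (hsubU haI hbI)).intervalIntegrable, intervalIntegral.integral_const_mul]
  have hA0 : A a1 = 0 := intervalIntegral.integral_same
  have hAb : A b = I := rfl
  rw [outer_congr, ibp2, hlast]
  simp only [hA0, hAb]
  have h1b : (1 : ℝ) - b = b1 := by rw [hbdef]; ring
  have hdd : (1 : ℝ) - a1 - b1 = b - a1 := by rw [hbdef]; ring
  rw [hc1, hc2, hΓ, hdd, hC, h1b]
  have hd2 : (b - a1) ^ 2 ≠ 0 := pow_ne_zero 2 hd
  field_simp
  ring
end

section
/- Let 0 ≤ a₂ < b̄₂ ≤ 1 with b̄₂ := 1 − b₂ and a₂ + b₂ < 1, and let G : [0,1] → ℝ be continuously differentiable on an open set containing [a₂, b̄₂]. With K(w,v) := min{w,v} − w·v, c_k := (1/(b̄₂ − a₂)) ∫_{a₂}^{b̄₂} G(u)^k du, and Γ := (1 − a₂ − b₂)^{−2}, the following identity holds: Γ·∫_{a₂}^{b̄₂} ∫_{a₂}^{b̄₂} K(w,v)·G(w)·G(v)·G'(v)·G'(w) dv dw = (Γ/4)·{ a₂(1−a₂)·G(a₂)⁴ + b₂(1−b₂)·G(b̄₂)⁴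 − 2a₂b₂·G(a₂)²·G(b̄₂)² − 2(1 − a₂ − b₂)·[a₂·G(a₂)² + b₂·G(b̄₂)²]·c₂ − Γ^{−1}·c₂² + (1 − a₂ − b₂)·c₄ }. -/
open MeasureTheory Set

/-- Closed-form expression `Λ₂₂₃` for the asymptotic variance component of the
second trimmed moment: single-integration formula for
`Γ·∫∫ K(w,v) G(w) G(v) G'(v) G'(w) dv dw` over `[a₂,b̄₂]²`. -/
theorem Lambda223_closed_form (a2 b2 : ℝ)
    (h0 : 0 ≤ a2) (h1 : a2 < 1 - b2) (h2 : 1 - b2 ≤ 1) (hab : a2 + b2 < 1)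
    (G : ℝ → ℝ) (U : Set ℝ) (hU : IsOpen U) (hsub : Icc a2 (1 - b2) ⊆ U)
    (hG : ContDiffOn ℝ 1 G U)
    (Γ c2 c4 : ℝ)
    (hΓ : Γ = ((1 - a2 - b2) ^ 2)⁻¹)
    (hc2 : c2 = ((1 - b2) - a2)⁻¹ * ∫ u in a2..(1 - b2), (G u) ^ 2)
    (hc4 : c4 = ((1 - b2) - a2)⁻¹ * ∫ u in a2..(1 - b2), (G u) ^ 4) :
    Γ * ∫ w in a2..(1 - b2), ∫ v in a2..(1 - b2),
        (min w v - w * v) * G w * G v * deriv G v * deriv G w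
      = (Γ / 4) * ( a2 * (1 - a2) * (G a2) ^ 4
        + b2 * (1 - b2) * (G (1 - b2)) ^ 4
        - 2 * a2 * b2 * (G a2) ^ 2 * (G (1 - b2)) ^ 2
        - 2 * (1 - a2 - b2) * (a2 * (G a2) ^ 2 + b2 * (G (1 - b2)) ^ 2) * c2
        - Γ⁻¹ * c2 ^ 2
        + (1 - a2 - b2) * c4 ) := by
  set b : ℝ := 1 - b2 with hbdef
  have hableb : a2 ≤ b := le_of_lt h1
  have haI : a2 ∈ Icc a2 b := ⟨le_rfl, hableb⟩
  have hbI : b ∈ Icc a2 b := ⟨hableb, le_rfl⟩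
  -- derivative and continuity facts for G
  have hGd : ∀ x ∈ Icc a2 b, HasDerivAt G (deriv G x) x := fun x hx =>
    (((hG.differentiableOn one_ne_zero) x (hsub hx)).differentiableAt
      (hU.mem_nhds (hsub hx))).hasDerivAt
  have hGc : ContinuousOn G (Icc a2 b) := hG.continuousOn.mono hsub
  have hG'c : ContinuousOn (deriv G) (Icc a2 b) :=
    (hG.continuousOn_deriv_of_isOpen hU le_rfl).mono hsub
  -- g = G·G', Hf = G²/2 with Hf' = g
  set g : ℝ → ℝ := fun x => G x * deriv G x with hgdef
  have hgc : ContinuousOn g (Icc a2 b) := hGc.mul hG'c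
  set Hf : ℝ → ℝ := fun x => G x ^ 2 / 2 with hHfdef
  have hHfd : ∀ x ∈ Icc a2 b, HasDerivAt Hf (g x) x := by
    intro x hx
    have h : HasDerivAt (fun y => G y ^ 2 / 2) (((2:ℕ):ℝ) * G x ^ (2 - 1) * deriv G x / 2) x :=
      ((hGd x hx).fun_pow 2).div_const 2
    convert h using 1
    simp [hgdef]; ring
  have hHfc : ContinuousOn Hf (Icc a2 b) := (hGc.pow 2).div_const 2
  have hHfU : ContinuousOn Hf U := (hG.continuousOn.pow 2).div_const 2
  -- generic interval integrability
  have hInt : ∀ (f : ℝ → ℝ), ContinuousOn f (Icc a2 b) →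
      ∀ c ∈ Icc a2 b, ∀ d ∈ Icc a2 b, IntervalIntegrable f volume c d := by
    intro f hf c hc d hd
    exact (hf.mono (uIcc_subset_Icc hc hd)).intervalIntegrable
  have hgInt : ∀ c ∈ Icc a2 b, ∀ d ∈ Icc a2 b, IntervalIntegrable g volume c d :=
    hInt g hgc
  -- Φ w = ∫_{a2}^w Hf
  set Φ : ℝ → ℝ := fun w => ∫ u in a2..w, Hf u with hΦdef
  have hΦd : ∀ w ∈ Icc a2 b, HasDerivAt Φ (Hf w) w := by
    intro w hw
    exact intervalIntegral.integral_hasDerivAt_right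
      (hInt Hf hHfc a2 haI w hw)
      (hHfU.stronglyMeasurableAtFilter hU w (hsub hw))
      (hHfU.continuousAt (hU.mem_nhds (hsub hw)))
  have hΦc : ContinuousOn Φ (Icc a2 b) := fun w hw =>
    ((hΦd w hw).continuousAt).continuousWithinAt
  -- key FTC computations
  have hxgd : ∀ x ∈ Icc a2 b, ∀ w ∈ Icc a2 b,
      ∫ v in x..w, v * g v = w * Hf w - x * Hf x - ∫ v in x..w, 1 * Hf v := by
    intro x hx w hw
    have hsubI : uIcc x w ⊆ Icc a2 b := uIcc_subset_Icc hx hw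
    exact intervalIntegral.integral_mul_deriv_eq_deriv_mul
      (fun y hy => hasDerivAt_id y)
      (fun y hy => hHfd y (hsubI hy))
      ((continuousOn_const.mono hsubI).intervalIntegrable)
      ((hgc.mono hsubI).intervalIntegrable)
  have hgFTC : ∀ x ∈ Icc a2 b, ∀ w ∈ Icc a2 b,
      ∫ v in x..w, g v = Hf w - Hf x := by
    intro x hx w hw
    have hsubI : uIcc x w ⊆ Icc a2 b := uIcc_subset_Icc hx hw
    exact intervalIntegral.integral_eq_sub_of_hasDerivAt
      (fun y hy => hHfd y (hsubI hy)) ((hgc.mono hsubI).intervalIntegrable)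
  -- inner integral
  have inner : ∀ w ∈ Icc a2 b,
      (∫ v in a2..b, (min w v - w * v) * G w * G v * deriv G v * deriv G w)
      = g w * ((w * Hf w - a2 * Hf a2 - Φ w) + w * (Hf b - Hf w)
          - w * (b * Hf b - a2 * Hf a2 - Φ b)) := by
    intro w hw
    have hminc : ContinuousOn (fun v => min w v * g v) (Icc a2 b) :=
      (continuous_const.min continuous_id).continuousOn.mul hgc
    have e1 : ∀ v : ℝ, (min w v - w * v) * G w * G v * deriv G v * deriv G w
        = g w * (min w v * g v) - (g w * w) * (v * g v) := by
      intro v; simp only [hgdef]; ring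
    have evg : ContinuousOn (fun v : ℝ => v * g v) (Icc a2 b) :=
      continuousOn_id.mul hgc
    rw [show (∫ v in a2..b, (min w v - w * v) * G w * G v * deriv G v * deriv G w)
        = ∫ v in a2..b, (g w * (min w v * g v) - (g w * w) * (v * g v)) from by
          simp only [e1]]
    rw [intervalIntegral.integral_sub
        ((hInt _ hminc a2 haI b hbI).const_mul _)
        ((hInt _ evg a2 haI b hbI).const_mul _),
      intervalIntegral.integral_const_mul, intervalIntegral.integral_const_mul]
    -- split the min integral at w
    have hsplit : (∫ v in a2..b, min w v * g v)
        = (∫ v in a2..w, min w v * g v) + ∫ v in w..b, min w v * g v :=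
      (intervalIntegral.integral_add_adjacent_intervals
        (hInt _ hminc a2 haI w hw) (hInt _ hminc w hw b hbI)).symm
    have hleft : (∫ v in a2..w, min w v * g v) = ∫ v in a2..w, v * g v := by
      apply intervalIntegral.integral_congr
      intro v hv
      rw [uIcc_of_le hw.1] at hv
      simp [min_eq_right hv.2]
    have hright : (∫ v in w..b, min w v * g v) = ∫ v in w..b, w * g v := by
      apply intervalIntegral.integral_congr
      intro v hv
      rw [uIcc_of_le hw.2] at hv
      simp [min_eq_left hv.1]
    have hwb : (∫ v in w..b, w * g v) = w * ∫ v in w..b, g v :=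
      intervalIntegral.integral_const_mul _ _
    rw [hsplit, hleft, hright, hxgd a2 haI w hw, hwb, hgFTC w hw b hbI,
      hxgd a2 haI b hbI]
    have hΦw : (∫ v in a2..w, 1 * Hf v) = Φ w := by simp [hΦdef]
    have hΦb : (∫ v in a2..b, 1 * Hf v) = Φ b := by simp [hΦdef]
    rw [hΦw, hΦb]
    ring
  -- outer integral
  set C1 : ℝ := Hf b - (b * Hf b - a2 * Hf a2 - Φ b) with hC1def
  have houter : (∫ w in a2..b, ∫ v in a2..b,
        (min w v - w * v) * G w * G v * deriv G v * deriv G w)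
      = ∫ w in a2..b, (C1 * (w * g w) - (a2 * Hf a2) * g w - Φ w * g w) := by
    apply intervalIntegral.integral_congr
    intro w hw
    rw [uIcc_of_le hableb] at hw
    simp only
    rw [inner w hw]
    simp only [hC1def]
    ring
  have hΦg : (∫ w in a2..b, Φ w * g w)
      = Φ b * Hf b - Φ a2 * Hf a2 - ∫ w in a2..b, Hf w * Hf w := by
    apply intervalIntegral.integral_mul_deriv_eq_deriv_mul
      (fun y hy => hΦd y (by rwa [uIcc_of_le hableb] at hy))
      (fun y hy => hHfd y (by rwa [uIcc_of_le hableb] at hy))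
      ((hHfc.mono (by rw [uIcc_of_le hableb])).intervalIntegrable)
      ((hgc.mono (by rw [uIcc_of_le hableb])).intervalIntegrable)
  have hΦa : Φ a2 = 0 := by simp [hΦdef]
  have hwg : (∫ w in a2..b, w * g w) = b * Hf b - a2 * Hf a2 - Φ b := by
    rw [hxgd a2 haI b hbI]
    congr 1
    simp [hΦdef]
  have hgint : (∫ w in a2..b, g w) = Hf b - Hf a2 := hgFTC a2 haI b hbI
  have hHf2 : (∫ w in a2..b, Hf w * Hf w) = (1/4) * ∫ u in a2..b, (G u) ^ 4 := by
    rw [← intervalIntegral.integral_const_mul]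
    apply intervalIntegral.integral_congr
    intro x _
    simp only [hHfdef]
    ring
  have hΦbval : Φ b = (1/2) * ∫ u in a2..b, (G u) ^ 2 := by
    rw [hΦdef, ← intervalIntegral.integral_const_mul]
    apply intervalIntegral.integral_congr
    intro x _
    simp only [hHfdef]
    ring
  have hexp : (∫ w in a2..b, (C1 * (w * g w) - (a2 * Hf a2) * g w - Φ w * g w))
      = C1 * (b * Hf b - a2 * Hf a2 - Φ b) - (a2 * Hf a2) * (Hf b - Hf a2)
        - (Φ b * Hf b - Φ a2 * Hf a2 - ∫ w in a2..b, Hf w * Hf w) := by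
    have i1 : IntervalIntegrable (fun w => w * g w) volume a2 b :=
      hInt _ (continuousOn_id.mul hgc) a2 haI b hbI
    have i2 : IntervalIntegrable g volume a2 b := hgInt a2 haI b hbI
    have i3 : IntervalIntegrable (fun w => Φ w * g w) volume a2 b :=
      hInt _ (hΦc.mul hgc) a2 haI b hbI
    rw [intervalIntegral.integral_sub ((i1.const_mul _).sub (i2.const_mul _)) i3,
      intervalIntegral.integral_sub (i1.const_mul _) (i2.const_mul _),
      intervalIntegral.integral_const_mul, intervalIntegral.integral_const_mul,
      hwg, hgint, hΦg]
  -- assemble and finish by algebra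
  have hs : (1 : ℝ) - a2 - b2 ≠ 0 := by
    intro h; apply absurd hab; linarith
  have hsv : b - a2 = 1 - a2 - b2 := by rw [hbdef]; ring
  have hG2 : (∫ u in a2..b, (G u) ^ 2) = (1 - a2 - b2) * c2 := by
    rw [hc2, hsv]
    field_simp
  have hG4 : (∫ u in a2..b, (G u) ^ 4) = (1 - a2 - b2) * c4 := by
    rw [hc4, hsv]
    field_simp
  have hA : Hf a2 = G a2 ^ 2 / 2 := rfl
  have hB : Hf b = G b ^ 2 / 2 := rfl
  have hPb : Φ b = (1 - a2 - b2) * c2 / 2 := by rw [hΦbval, hG2]; ring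
  rw [houter, hexp, hΦa, hHf2, hG4, hC1def, hPb, hA, hB, hΓ]
  have hbb : b = 1 - b2 := hbdef
  rw [hbb]
  field_simp
  ring
end
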